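/- Let φ : (0,∞) → [0,1] be a uniformly continuous function and define β(x) := e^x ∫_x^∞ e^{−v} φ(v) dv for x > 0, so that β(x) = e^{−ε} β(x+ε) + ∫_x^{x+ε} e^{−(v−x)} φ(v) dv for all ε > 0. If β(x) → β as x → ∞ for some β ∈ [0,1], then φ(x) → β as x → ∞. -/
import Mathlib
set_option maxHeartbeats 800000

open Filter MeasureTheory

/-- For uniformly continuous `φ : (0,∞) → [0,1]` and
`β(x) := e^x ∫_x^∞ e^{-v} φ(v) dv` (so that
`β(x) = e^{-ε} β(x+ε) + ∫_x^{x+ε} e^{-(v-x)} φ(v) dv` for all `ε > 0`),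
if `β(x) → β ∈ [0,1]` as `x → ∞`, then `φ(x) → β` as `x → ∞`. -/
theorem phi_tendsto_of_betaInt_tendsto
    (φ : ℝ → ℝ) (hunif : UniformContinuousOn φ (Set.Ioi 0))
    (hφ : ∀ x, 0 < x → φ x ∈ Set.Icc (0 : ℝ) 1)
    (β : ℝ) (hβ : β ∈ Set.Icc (0 : ℝ) 1)
    (βf : ℝ → ℝ)
    (hβf : ∀ x, 0 < x →
      βf x = Real.exp x * ∫ v in Set.Ioi x, Real.exp (-v) * φ v)
    (hlim : Tendsto βf atTop (nhds β)) :
    Tendsto φ atTop (nhds β) := by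
  set f : ℝ → ℝ := fun v => Real.exp (-v) * φ v with hf
  have hcont : ContinuousOn φ (Set.Ioi 0) := hunif.continuousOn
  -- integrability on Ioi x for x > 0
  have hint : ∀ x : ℝ, 0 < x → IntegrableOn f (Set.Ioi x) := by
    intro x hx
    have hexp : IntegrableOn (fun v : ℝ => Real.exp (-v)) (Set.Ioi x) := by
      have := exp_neg_integrableOn_Ioi x (one_pos (α := ℝ))
      simpa using this
    refine hexp.integrable.mono' ?_ ?_
    · exact ((Real.continuous_exp.comp continuous_neg).continuousOn.mul
        (hcont.mono (Set.Ioi_subset_Ioi hx.le))).aestronglyMeasurable measurableSet_Ioi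
    · filter_upwards [ae_restrict_mem measurableSet_Ioi] with v hv
      have hv0 : 0 < v := lt_trans hx hv
      have := hφ v hv0
      rw [hf]
      simp only [norm_mul, Real.norm_eq_abs, abs_of_pos (Real.exp_pos _)]
      nlinarith [abs_le.mpr ⟨by linarith [this.1], this.2⟩, Real.exp_pos (-v)]
  -- exp integral over Ioc
  have hexpIoc : ∀ x d : ℝ, 0 < d →
      ∫ v in Set.Ioc x (x + d), Real.exp (-v) = Real.exp (-x) - Real.exp (-(x + d)) := by
    intro x d hd
    rw [← intervalIntegral.integral_of_le (by linarith)]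
    rw [intervalIntegral.integral_comp_neg (fun v => Real.exp v), integral_exp]
  rw [Metric.tendsto_atTop]
  intro ε hε
  obtain ⟨δ, hδ0, hδ⟩ := Metric.uniformContinuousOn_iff.mp hunif (ε / 3) (by positivity)
  set d := δ / 2 with hdd
  have hd0 : 0 < d := by positivity
  set c := 1 - Real.exp (-d) with hc
  have hc0 : 0 < c := by
    have : Real.exp (-d) < 1 := Real.exp_lt_one_iff.mpr (by linarith)
    linarith
  set I : ℝ → ℝ := fun x => Real.exp x * ∫ v in Set.Ioc x (x + d), f v with hI
  -- split identity
  have hsplit : ∀ x : ℝ, 0 < x → I x = βf x - Real.exp (-d) * βf (x + d) := by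
    intro x hx
    have hxd : 0 < x + d := by linarith
    have hun : Set.Ioc x (x + d) ∪ Set.Ioi (x + d) = Set.Ioi x :=
      Set.Ioc_union_Ioi_eq_Ioi (by linarith)
    have hsplit' : ∫ v in Set.Ioi x, f v =
        (∫ v in Set.Ioc x (x + d), f v) + ∫ v in Set.Ioi (x + d), f v := by
      rw [← hun, setIntegral_union Set.Ioc_disjoint_Ioi_same measurableSet_Ioi
        (((hint x hx).mono_set (by rw [← hun]; exact Set.subset_union_left)))
        (hint (x + d) hxd)]
    rw [hβf x hx, hβf (x + d) hxd, hsplit', hI]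
    have h1 : Real.exp (-d) * Real.exp (x + d) = Real.exp x := by
      rw [← Real.exp_add]; ring_nf
    simp only
    linear_combination (∫ v in Set.Ioi (x + d), f v) * h1
  -- limit of I
  have hIlim : Tendsto I atTop (nhds (β * c)) := by
    have h2 : Tendsto (fun x => βf (x + d)) atTop (nhds β) :=
      hlim.comp (tendsto_atTop_add_const_right _ d tendsto_id)
    have h3 : Tendsto (fun x => βf x - Real.exp (-d) * βf (x + d)) atTop
        (nhds (β - Real.exp (-d) * β)) := hlim.sub (h2.const_mul _)
    have h4 : β - Real.exp (-d) * β = β * c := by rw [hc]; ring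
    rw [← h4]
    refine h3.congr' ?_
    filter_upwards [eventually_gt_atTop 0] with x hx
    exact (hsplit x hx).symm
  -- pointwise comparison with φ
  have hbound : ∀ x : ℝ, 0 < x → |I x - φ x * c| ≤ ε / 3 * c := by
    intro x hx
    have hIocInt : IntegrableOn f (Set.Ioc x (x + d)) :=
      (hint x hx).mono_set Set.Ioc_subset_Ioi_self
    have hexpInt : IntegrableOn (fun v : ℝ => Real.exp (-v)) (Set.Ioc x (x + d)) := by
      have h := exp_neg_integrableOn_Ioi x (one_pos (α := ℝ))
      have h' : IntegrableOn (fun v : ℝ => Real.exp (-v)) (Set.Ioi x) := by simpa using h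
      exact h'.mono_set Set.Ioc_subset_Ioi_self
    have h1 : Real.exp x * (Real.exp (-x) - Real.exp (-(x + d))) = c := by
      rw [hc, mul_sub, ← Real.exp_add, ← Real.exp_add]; ring_nf; simp [Real.exp_zero]
    have key : I x - φ x * c =
        Real.exp x * ∫ v in Set.Ioc x (x + d), (f v - φ x * Real.exp (-v)) := by
      rw [integral_sub hIocInt (hexpInt.const_mul _), integral_const_mul,
        hexpIoc x d hd0, hI]
      simp only
      linear_combination φ x * h1
    have hb2 : ‖∫ v in Set.Ioc x (x + d), (f v - φ x * Real.exp (-v))‖ ≤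
        ∫ v in Set.Ioc x (x + d), ε / 3 * Real.exp (-v) := by
      refine norm_integral_le_of_norm_le (hexpInt.const_mul _) ?_
      filter_upwards [ae_restrict_mem measurableSet_Ioc] with v hv
      have hv0 : 0 < v := lt_trans hx hv.1
      have hdist : dist v x < δ := by
        rw [Real.dist_eq, abs_of_pos (by linarith [hv.1] : (0:ℝ) < v - x)]
        have := hv.2; rw [hdd] at *; linarith
      have hφd := hδ v (Set.mem_Ioi.mpr hv0) x (Set.mem_Ioi.mpr hx) hdist
      rw [Real.dist_eq] at hφd
      have heq : f v - φ x * Real.exp (-v) = Real.exp (-v) * (φ v - φ x) := by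
        rw [hf]; ring
      rw [heq, norm_mul, Real.norm_eq_abs, Real.norm_eq_abs,
        abs_of_pos (Real.exp_pos _)]
      nlinarith [Real.exp_pos (-v), abs_nonneg (φ v - φ x)]
    have hval : ∫ v in Set.Ioc x (x + d), ε / 3 * Real.exp (-v) =
        ε / 3 * (Real.exp (-x) - Real.exp (-(x + d))) := by
      rw [integral_const_mul, hexpIoc x d hd0]
    rw [key, abs_mul, abs_of_pos (Real.exp_pos x)]
    calc Real.exp x * |∫ v in Set.Ioc x (x + d), (f v - φ x * Real.exp (-v))| ≤
        Real.exp x * (ε / 3 * (Real.exp (-x) - Real.exp (-(x + d)))) := by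
          rw [← hval]
          exact mul_le_mul_of_nonneg_left (by simpa using hb2) (Real.exp_pos x).le
      _ = ε / 3 * c := by rw [← h1]; ring
  -- conclude
  obtain ⟨N, hN⟩ := Metric.tendsto_atTop.mp hIlim (ε / 3 * c) (by positivity)
  refine ⟨max N 1, fun x hx => ?_⟩
  have hx1 : (0 : ℝ) < x := lt_of_lt_of_le one_pos (le_trans (le_max_right N 1) hx)
  have h2 := hN x (le_trans (le_max_left N 1) hx)
  rw [Real.dist_eq] at h2 ⊢
  have h1 := hbound x hx1
  have hkey : |φ x - β| * c < ε * c := by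
    have heq : |φ x - β| * c = |φ x * c - β * c| := by
      rw [show φ x * c - β * c = (φ x - β) * c by ring, abs_mul, abs_of_pos hc0]
    rw [heq]
    calc |φ x * c - β * c| ≤ |φ x * c - I x| + |I x - β * c| := abs_sub_le _ _ _
      _ < ε / 3 * c + ε / 3 * c := by
          refine add_lt_add_of_le_of_lt (by rw [abs_sub_comm]; exact h1) ?_
          exact h2
      _ ≤ ε * c := by nlinarith
  exact lt_of_mul_lt_mul_right hkey hc0.le
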